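/- arXiv:2510.20032 — 4 statements merged into one kernel-verified Lean document; each statement's English description precedes it below -/
import Mathlib

section
/- lim_{t→0} ∫_{ℝ^k} ((g(x,t) − g(x,0))/t) · 1_{S_t}(x) dx = ∫_{ℝ^k} g'(x,0) · 1_{S_0}(x) dx, where g'(x,0) denotes the derivative of t ↦ g(x,t) at t = 0. -/
open MeasureTheory Filter

/-- Term-1 convergence in the proof of the main differentiation theorem: the difference
quotients of `g` integrated over the moving domains `S_t` converge to the integral of the
derivative over `S_0`:
`lim_{t→0} ∫ ((g(x,t) − g(x,0))/t) 1_{S_t}(x) dx = ∫ g'(x,0) 1_{S_0}(x) dx`. -/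
theorem stmt4 {k : ℕ}
    (g : EuclideanSpace ℝ (Fin k) → ℝ → ℝ)
    (hg_meas : Measurable (Function.uncurry g))
    (N : Set ℝ) (hN : N ∈ nhds (0 : ℝ))
    (K : EuclideanSpace ℝ (Fin k) → ℝ) (hK : Integrable K)
    (h_diff : ∀ᵐ x, ∀ t ∈ N, DifferentiableAt ℝ (g x) t ∧ |deriv (g x) t| ≤ K x)
    (hg0 : Integrable (fun x => g x 0))
    (S : ℝ → Set (EuclideanSpace ℝ (Fin k)))
    (hS_meas : ∀ t ∈ N, MeasurableSet (S t))
    (hS_conv : ∀ᵐ x, Tendsto (fun t : ℝ => Set.indicator (S t) (fun _ => (1 : ℝ)) x)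
        (nhds 0) (nhds (Set.indicator (S 0) (fun _ => (1 : ℝ)) x))) :
    Tendsto
      (fun t : ℝ => ∫ x, ((g x t - g x 0) / t) * Set.indicator (S t) (fun _ => (1 : ℝ)) x)
      (nhdsWithin 0 {(0 : ℝ)}ᶜ)
      (nhds (∫ x, deriv (g x) 0 * Set.indicator (S 0) (fun _ => (1 : ℝ)) x)) := by
  obtain ⟨ε, hε, hball⟩ := Metric.mem_nhds_iff.mp hN
  have h0N : (0 : ℝ) ∈ N := mem_of_mem_nhds hN
  have hmemN : ∀ᶠ t in nhdsWithin (0:ℝ) {(0:ℝ)}ᶜ, t ∈ Metric.ball (0:ℝ) ε ∧ t ≠ 0 := by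
    filter_upwards [eventually_nhdsWithin_of_eventually_nhds
      (eventually_of_mem (Metric.ball_mem_nhds 0 hε) fun t ht => ht),
      self_mem_nhdsWithin] with t h1 h2
    exact ⟨h1, h2⟩
  apply tendsto_integral_filter_of_dominated_convergence K
  · filter_upwards [hmemN] with t ⟨ht, ht0⟩
    have hgt : Measurable fun x => g x t :=
      hg_meas.comp (measurable_id.prodMk measurable_const)
    have hg0m : Measurable fun x => g x 0 :=
      hg_meas.comp (measurable_id.prodMk measurable_const)
    exact (((hgt.sub hg0m).div_const t).mul
      ((measurable_const.indicator (hS_meas t (hball ht))))).aestronglyMeasurable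
  · filter_upwards [hmemN] with t ⟨ht, ht0⟩
    filter_upwards [h_diff] with x hx
    have hK0 : 0 ≤ K x := le_trans (abs_nonneg _) (hx 0 h0N).2
    have hbound : |g x t - g x 0| ≤ K x * |t| := by
      have := (convex_ball (0:ℝ) ε).norm_image_sub_le_of_norm_deriv_le
        (f := g x) (C := K x)
        (fun y hy => (hx y (hball hy)).1)
        (fun y hy => by simpa [Real.norm_eq_abs] using (hx y (hball hy)).2)
        (Metric.mem_ball_self hε) ht
      simpa [Real.norm_eq_abs, sub_zero] using this
    have hind : |Set.indicator (S t) (fun _ => (1:ℝ)) x| ≤ 1 := by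
      by_cases hxS : x ∈ S t <;> simp [Set.indicator_apply, hxS]
    calc ‖(g x t - g x 0) / t * Set.indicator (S t) (fun _ => (1:ℝ)) x‖
        = |(g x t - g x 0) / t| * |Set.indicator (S t) (fun _ => (1:ℝ)) x| := by
          rw [Real.norm_eq_abs, abs_mul]
      _ ≤ |(g x t - g x 0) / t| * 1 := by
          exact mul_le_mul_of_nonneg_left hind (abs_nonneg _)
      _ = |g x t - g x 0| / |t| := by rw [mul_one, abs_div]
      _ ≤ K x * |t| / |t| := by
          gcongr
      _ = K x := by
          rw [mul_div_assoc, div_self (abs_ne_zero.mpr ht0), mul_one]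
  · exact hK
  · filter_upwards [h_diff, hS_conv] with x hx hSx
    have hd : HasDerivAt (g x) (deriv (g x) 0) 0 := (hx 0 h0N).1.hasDerivAt
    have h1 : Tendsto (fun t => (g x t - g x 0) / t) (nhdsWithin (0:ℝ) {(0:ℝ)}ᶜ)
        (nhds (deriv (g x) 0)) := by
      have := hasDerivAt_iff_tendsto_slope.mp hd
      simpa [slope_fun_def, sub_zero, div_eq_inv_mul] using this
    exact h1.mul (hSx.mono_left nhdsWithin_le_nhds)
end

section
/- For every bounded measurable function g : 𝒜 × 𝓡 × 𝓡' → ℝ, the inverse-weighting identity Σ_{a∈𝒜} E[m_a(R) μ_a(R,R') g(a, R, R')] = E[Y g(A, R, R')] holds. -/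
open scoped Classical

open MeasureTheory

/-- Lemma (identification / inverse-weighting identity): for every bounded measurable
`g : 𝒜 × 𝓡 × 𝓡' → ℝ`,
`Σ_a E[m_a(R) μ_a(R,R') g(a,R,R')] = E[Y g(A,R,R')]`, where
`E[Y | σ(A,R,R')] = m_A(R)` a.s. and `E[1{A=a} | σ(R,R')] = μ_a(R,R')` a.s. -/
theorem stmt7 {Ω 𝒜 𝓡 𝓡' : Type*} [MeasurableSpace Ω]
    [Fintype 𝒜] [MeasurableSpace 𝒜] [MeasurableSingletonClass 𝒜]
    [MeasurableSpace 𝓡] [MeasurableSpace 𝓡']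
    (P : Measure Ω) [IsProbabilityMeasure P]
    (A : Ω → 𝒜) (R : Ω → 𝓡) (R' : Ω → 𝓡') (Y : Ω → ℝ)
    (hA : Measurable A) (hR : Measurable R) (hR' : Measurable R')
    (hY_int : Integrable Y P)
    (m : 𝒜 → 𝓡 → ℝ) (μa : 𝒜 → 𝓡 → 𝓡' → ℝ)
    (hm_meas : ∀ a, Measurable (m a))
    (hμ_meas : ∀ a, Measurable (fun q : 𝓡 × 𝓡' => μa a q.1 q.2))
    -- E[Y | σ(A,R,R')] = m_A(R) a.s. (this encodes E[Y|A,R] = m_A(R) together with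
    -- conditional independence of Y and R' given (A,R))
    (h_condY : P[Y | MeasurableSpace.comap (fun ω => (A ω, R ω, R' ω)) inferInstance]
        =ᵐ[P] fun ω => m (A ω) (R ω))
    -- E[1{A=a} | σ(R,R')] = μ_a(R,R') a.s.
    (h_condA : ∀ a : 𝒜,
        P[(fun ω => if A ω = a then (1 : ℝ) else 0) |
            MeasurableSpace.comap (fun ω => (R ω, R' ω)) inferInstance]
          =ᵐ[P] fun ω => μa a (R ω) (R' ω))
    -- a bounded measurable function g
    (g : 𝒜 → 𝓡 → 𝓡' → ℝ)
    (hg_meas : ∀ a, Measurable (fun q : 𝓡 × 𝓡' => g a q.1 q.2))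
    (Cg : ℝ) (hg_bdd : ∀ a r r', |g a r r'| ≤ Cg) :
    ∑ a : 𝒜, ∫ ω, m a (R ω) * μa a (R ω) (R' ω) * g a (R ω) (R' ω) ∂P
      = ∫ ω, Y ω * g (A ω) (R ω) (R' ω) ∂P := by
  classical
  -- Ω is nonempty since P is a probability measure
  haveI hΩ : Nonempty Ω := by
    rcases isEmpty_or_nonempty Ω with h | h
    · have h1 : P Set.univ = 1 := measure_univ
      rw [Set.univ_eq_empty_iff.2 h, measure_empty] at h1
      exact absurd h1 (by norm_num)
    · exact h
  obtain ⟨ω₀⟩ := hΩ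
  have hCg0 : 0 ≤ Cg := le_trans (abs_nonneg _) (hg_bdd (A ω₀) (R ω₀) (R' ω₀))
  set π₁ : Ω → 𝒜 × 𝓡 × 𝓡' := fun ω => (A ω, R ω, R' ω) with hπ₁def
  set π₂ : Ω → 𝓡 × 𝓡' := fun ω => (R ω, R' ω) with hπ₂def
  have hπ₁m : Measurable π₁ := hA.prod (hR.prod hR')
  have hπ₂m : Measurable π₂ := hR.prod hR'
  have h𝔪₁ : MeasurableSpace.comap π₁ inferInstance ≤ _ := hπ₁m.comap_le
  have h𝔪₂ : MeasurableSpace.comap π₂ inferInstance ≤ _ := hπ₂m.comap_le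
  haveI : SigmaFinite (P.trim h𝔪₁) := by
    haveI := isFiniteMeasure_trim (μ := P) h𝔪₁; infer_instance
  haveI : SigmaFinite (P.trim h𝔪₂) := by
    haveI := isFiniteMeasure_trim (μ := P) h𝔪₂; infer_instance
  -- measurability of g in all variables jointly
  have hG : Measurable fun p : 𝒜 × 𝓡 × 𝓡' => g p.1 p.2.1 p.2.2 := by
    have hEq : (fun p : 𝒜 × 𝓡 × 𝓡' => g p.1 p.2.1 p.2.2)
        = fun p => ∑ a : 𝒜, if p.1 = a then g a p.2.1 p.2.2 else 0 := by
      funext p; simp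
    rw [hEq]
    exact Finset.measurable_sum _ fun a _ =>
      Measurable.ite (measurable_fst (measurableSet_singleton a))
        ((hg_meas a).comp measurable_snd) measurable_const
  set h : Ω → ℝ := fun ω => g (A ω) (R ω) (R' ω) with hhdef
  have hhmeas : Measurable h := hG.comp hπ₁m
  have hh𝔪₁ : StronglyMeasurable[MeasurableSpace.comap π₁ inferInstance] h :=
    (hG.comp (Measurable.of_comap_le le_rfl)).stronglyMeasurable
  have hh_bdd : ∀ ω, ‖h ω‖ ≤ Cg := fun ω => by
    simpa [Real.norm_eq_abs] using hg_bdd (A ω) (R ω) (R' ω)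
  have hhY_int : Integrable (h * Y) P :=
    hY_int.bdd_mul hhmeas.aestronglyMeasurable (Filter.Eventually.of_forall hh_bdd)
  -- integrability of m_A(R)
  have hmar_int : Integrable (fun ω => m (A ω) (R ω)) P :=
    (integrable_condExp (m := MeasurableSpace.comap π₁ inferInstance) (f := Y)).congr h_condY
  -- Step 1: E[Y g(A,R,R')] = E[g(A,R,R') m_A(R)]
  have e1 : ∫ ω, Y ω * h ω ∂P = ∫ ω, h ω * m (A ω) (R ω) ∂P := by
    have hpull : P[h * Y|MeasurableSpace.comap π₁ inferInstance] =ᵐ[P] h * P[Y|MeasurableSpace.comap π₁ inferInstance] :=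
      condExp_mul_of_stronglyMeasurable_left hh𝔪₁ hhY_int hY_int
    have hmid : P[h * Y|MeasurableSpace.comap π₁ inferInstance] =ᵐ[P] fun ω => h ω * m (A ω) (R ω) := by
      filter_upwards [hpull, h_condY] with ω h1 h2
      simp only [Pi.mul_apply] at h1 ⊢
      rw [h1, h2]
    calc ∫ ω, Y ω * h ω ∂P = ∫ ω, (h * Y) ω ∂P := by
          simp only [Pi.mul_apply, mul_comm]
      _ = ∫ ω, (P[h * Y|MeasurableSpace.comap π₁ inferInstance]) ω ∂P := (integral_condExp h𝔪₁).symm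
      _ = ∫ ω, h ω * m (A ω) (R ω) ∂P := integral_congr_ae hmid
  -- indicator functions
  set ind : 𝒜 → Ω → ℝ := fun a ω => if A ω = a then (1 : ℝ) else 0 with hinddef
  have hind_meas : ∀ a, Measurable (ind a) := fun a =>
    Measurable.ite (hA (measurableSet_singleton a)) measurable_const measurable_const
  have hind_int : ∀ a, Integrable (ind a) P := fun a =>
    (integrable_const (1 : ℝ)).mono (hind_meas a).aestronglyMeasurable
      (Filter.Eventually.of_forall fun ω => by
        by_cases hc : A ω = a <;> simp [ind, hc])
  -- f_a := m_a(R) g(a,R,R')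
  set f : 𝒜 → Ω → ℝ := fun a ω => m a (R ω) * g a (R ω) (R' ω) with hfdef
  have hf_meas : ∀ a, Measurable (f a) := fun a =>
    ((hm_meas a).comp hR).mul ((hg_meas a).comp hπ₂m)
  have hf𝔪₂ : ∀ a, StronglyMeasurable[MeasurableSpace.comap π₂ inferInstance] (f a) := fun a =>
    ((((hm_meas a).comp measurable_fst).mul (hg_meas a)).comp
      (Measurable.of_comap_le le_rfl)).stronglyMeasurable
  -- integrability of f_a * ind_a
  have hfind_int : ∀ a, Integrable (f a * ind a) P := by
    intro a
    refine Integrable.mono ((hmar_int.abs).const_mul Cg)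
      ((hf_meas a).mul (hind_meas a)).aestronglyMeasurable
      (Filter.Eventually.of_forall fun ω => ?_)
    by_cases hc : A ω = a
    · have hfe : (f a * ind a) ω = m a (R ω) * g a (R ω) (R' ω) := by
        simp [f, ind, hc]
      rw [hfe, Real.norm_eq_abs, Real.norm_eq_abs, abs_mul,
        abs_of_nonneg (mul_nonneg hCg0 (abs_nonneg _)), hc]
      calc |m a (R ω)| * |g a (R ω) (R' ω)| ≤ |m a (R ω)| * Cg :=
            mul_le_mul_of_nonneg_left (hg_bdd _ _ _) (abs_nonneg _)
        _ = Cg * |m a (R ω)| := mul_comm _ _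
    · have hfe : (f a * ind a) ω = 0 := by simp [ind, hc]
      rw [hfe, norm_zero, Real.norm_eq_abs]
      positivity
  -- Step 2: pointwise decomposition over a
  have e2 : (fun ω => h ω * m (A ω) (R ω)) = fun ω => ∑ a : 𝒜, (f a * ind a) ω := by
    funext ω
    simp only [Pi.mul_apply, ind, f, mul_ite, mul_one, mul_zero]
    rw [Finset.sum_ite_eq (Finset.univ) (A ω) (fun a => m a (R ω) * g a (R ω) (R' ω))]
    simp [h, mul_comm]
  -- Step 3: for each a, E[f_a ind_a] = E[f_a μ_a]
  have e3 : ∀ a, ∫ ω, (f a * ind a) ω ∂P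
      = ∫ ω, m a (R ω) * μa a (R ω) (R' ω) * g a (R ω) (R' ω) ∂P := by
    intro a
    have hpull : P[f a * ind a|MeasurableSpace.comap π₂ inferInstance] =ᵐ[P] f a * P[ind a|MeasurableSpace.comap π₂ inferInstance] :=
      condExp_mul_of_stronglyMeasurable_left (hf𝔪₂ a) (hfind_int a) (hind_int a)
    have hmid : P[f a * ind a|MeasurableSpace.comap π₂ inferInstance] =ᵐ[P]
        fun ω => m a (R ω) * μa a (R ω) (R' ω) * g a (R ω) (R' ω) := by
      filter_upwards [hpull, h_condA a] with ω h1 h2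
      simp only [Pi.mul_apply] at h1 ⊢
      rw [h1, h2]; simp only [f]; ring
    calc ∫ ω, (f a * ind a) ω ∂P = ∫ ω, (P[f a * ind a|MeasurableSpace.comap π₂ inferInstance]) ω ∂P :=
          (integral_condExp h𝔪₂).symm
      _ = _ := integral_congr_ae hmid
  calc ∑ a : 𝒜, ∫ ω, m a (R ω) * μa a (R ω) (R' ω) * g a (R ω) (R' ω) ∂P
      = ∑ a : 𝒜, ∫ ω, (f a * ind a) ω ∂P := by
        exact Finset.sum_congr rfl fun a _ => (e3 a).symm
    _ = ∫ ω, ∑ a : 𝒜, (f a * ind a) ω ∂P :=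
        (integral_finset_sum _ fun a _ => hfind_int a).symm
    _ = ∫ ω, h ω * m (A ω) (R ω) ∂P := by rw [← e2]
    _ = ∫ ω, Y ω * h ω ∂P := e1.symm
    _ = ∫ ω, Y ω * g (A ω) (R ω) (R' ω) ∂P := rfl
end

section
/- There exist ε > 0 and a function c : (−ε, ε) → ℝ with c(0) = c₀ such that 1 − F_θ(c(θ)) = q for all θ ∈ (−ε, ε), c is differentiable at 0, and c'(0) = (∫_{c₀}^∞ s(r) f(r) dr) / f(c₀). (This identifies the influence of a marginal policy perturbation on the market-clearing cutoff in a price-based allocation: the representer of the derivative is ψ(r) = 1{r > c₀}/f(c₀).) -/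
open MeasureTheory Set

noncomputable def triEquiv (a b : ℝ) (hb : b ≠ 0) : (ℝ × ℝ) ≃L[ℝ] (ℝ × ℝ) :=
  ContinuousLinearEquiv.equivOfInverse
    ((ContinuousLinearMap.fst ℝ ℝ ℝ).prod
      (a • ContinuousLinearMap.fst ℝ ℝ ℝ + b • ContinuousLinearMap.snd ℝ ℝ ℝ))
    ((ContinuousLinearMap.fst ℝ ℝ ℝ).prod
      (b⁻¹ • (ContinuousLinearMap.snd ℝ ℝ ℝ - a • ContinuousLinearMap.fst ℝ ℝ ℝ)))
    (fun p => by simp; field_simp)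
    (fun p => by simp; field_simp; simp)

@[simp] lemma triEquiv_apply (a b : ℝ) (hb : b ≠ 0) (p : ℝ × ℝ) :
    triEquiv a b hb p = (p.1, a * p.1 + b * p.2) := by
  simp [triEquiv]

@[simp] lemma triEquiv_symm_apply (a b : ℝ) (hb : b ≠ 0) (p : ℝ × ℝ) :
    (triEquiv a b hb).symm p = (p.1, b⁻¹ * (p.2 - a * p.1)) := by
  simp [triEquiv]


/-- Price-based allocation: the market-clearing cutoff along the perturbed path
`F_θ(x) = ∫_{−∞}^x f(r)(1+θ s(r)) dr` exists locally, satisfies `1 − F_θ(c(θ)) = q`, and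
is differentiable at `0` with `c'(0) = (∫_{c₀}^∞ s f)/f(c₀)`; i.e. the representer of the
derivative is `ψ(r) = 1{r > c₀}/f(c₀)`. -/
theorem stmt11 (f s : ℝ → ℝ)
    (hf_cont : Continuous f) (hf_nonneg : ∀ x, 0 ≤ f x) (hf_prob : ∫ x, f x = 1)
    (hs_cont : Continuous s) (Ms : ℝ) (hs_bdd : ∀ x, |s x| ≤ Ms)
    (hs_mean : ∫ r, s r * f r = 0)
    (q : ℝ) (hq : q ∈ Ioo (0 : ℝ) 1)
    (c₀ : ℝ) (hc₀ : 1 - (∫ r in Iic c₀, f r) = q)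
    (hfc₀_pos : 0 < f c₀) :
    ∃ ε > (0 : ℝ), ∃ c : ℝ → ℝ, c 0 = c₀ ∧
      (∀ θ ∈ Ioo (-ε) ε, 1 - (∫ r in Iic (c θ), f r * (1 + θ * s r)) = q) ∧
      HasDerivAt c ((∫ r in Ioi c₀, s r * f r) / f c₀) 0 := by
  have hb : f c₀ ≠ 0 := ne_of_gt hfc₀_pos
  -- integrability
  have hf_int : Integrable f := by
    by_contra h
    rw [integral_undef h] at hf_prob; norm_num at hf_prob
  have hsf_int : Integrable (fun r => s r * f r) := by
    refine hf_int.bdd_mul (c := Ms) hs_cont.aestronglyMeasurable ?_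
    exact Filter.Eventually.of_forall fun x => by simpa using hs_bdd x
  set F : ℝ → ℝ := fun x => ∫ r in Iic x, f r with hFdef
  set S : ℝ → ℝ := fun x => ∫ r in Iic x, s r * f r with hSdef
  -- derivatives of F and S
  have hF : HasStrictDerivAt F (f c₀) c₀ := by
    have h1 : ∀ x, F x = F 0 + ∫ t in (0:ℝ)..x, f t := by
      intro x
      rw [← intervalIntegral.integral_Iic_sub_Iic hf_int.integrableOn hf_int.integrableOn]
      ring
    have h2 : HasStrictDerivAt (fun x => F 0 + ∫ t in (0:ℝ)..x, f t) (f c₀) c₀ :=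
      (intervalIntegral.integral_hasStrictDerivAt_right hf_int.intervalIntegrable
        (hf_cont.stronglyMeasurable.stronglyMeasurableAtFilter) hf_cont.continuousAt).const_add
        (F 0)
    exact (funext h1 : F = _) ▸ h2
  have hS : HasStrictDerivAt S (s c₀ * f c₀) c₀ := by
    have h1 : ∀ x, S x = S 0 + ∫ t in (0:ℝ)..x, s t * f t := by
      intro x
      rw [← intervalIntegral.integral_Iic_sub_Iic hsf_int.integrableOn hsf_int.integrableOn]
      ring
    have h2 : HasStrictDerivAt (fun x => S 0 + ∫ t in (0:ℝ)..x, s t * f t) (s c₀ * f c₀) c₀ :=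
      (intervalIntegral.integral_hasStrictDerivAt_right hsf_int.intervalIntegrable
        ((hs_cont.mul hf_cont).stronglyMeasurable.stronglyMeasurableAtFilter)
        ((hs_cont.mul hf_cont).continuousAt)).const_add (S 0)
    exact (funext h1 : S = _) ▸ h2
  -- the map Φ
  set G : ℝ × ℝ → ℝ := fun p => F p.2 + p.1 * S p.2 with hGdef
  set Φ : ℝ × ℝ → ℝ × ℝ := fun p => (p.1, G p) with hΦdef
  have hsnd : HasStrictFDerivAt (fun p : ℝ × ℝ => p.2) (ContinuousLinearMap.snd ℝ ℝ ℝ) ((0:ℝ), c₀) :=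
    (ContinuousLinearMap.snd ℝ ℝ ℝ).hasStrictFDerivAt
  have hfst : HasStrictFDerivAt (fun p : ℝ × ℝ => p.1) (ContinuousLinearMap.fst ℝ ℝ ℝ) ((0:ℝ), c₀) :=
    (ContinuousLinearMap.fst ℝ ℝ ℝ).hasStrictFDerivAt
  have hFsnd : HasStrictFDerivAt (fun p : ℝ × ℝ => F p.2)
      (((1 : ℝ →L[ℝ] ℝ).smulRight (f c₀)).comp (ContinuousLinearMap.snd ℝ ℝ ℝ)) ((0:ℝ), c₀) :=
    (hF.hasStrictFDerivAt).comp _ hsnd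
  have hSsnd : HasStrictFDerivAt (fun p : ℝ × ℝ => S p.2)
      (((1 : ℝ →L[ℝ] ℝ).smulRight (s c₀ * f c₀)).comp (ContinuousLinearMap.snd ℝ ℝ ℝ)) ((0:ℝ), c₀) :=
    (hS.hasStrictFDerivAt).comp _ hsnd
  have hmul := hfst.mul hSsnd
  have hG := hFsnd.add hmul
  have hΦ : HasStrictFDerivAt Φ (↑(triEquiv (S c₀) (f c₀) hb) : (ℝ × ℝ) →L[ℝ] (ℝ × ℝ)) ((0:ℝ), c₀) := by
    have h := hfst.prodMk hG
    refine h.congr_fderiv ?_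
    apply ContinuousLinearMap.ext
    intro p
    simp [triEquiv]
    ring
  set Ψ : ℝ × ℝ → ℝ × ℝ := hΦ.localInverse Φ (triEquiv (S c₀) (f c₀) hb) ((0:ℝ), c₀) with hΨdef
  have hΦ0 : Φ ((0:ℝ), c₀) = ((0:ℝ), 1 - q) := by
    simp only [hΦdef, hGdef]
    refine Prod.ext rfl ?_
    simp only []
    have : F c₀ = 1 - q := by linarith
    simp [this]
  have hΨ0 : Ψ ((0:ℝ), 1 - q) = ((0:ℝ), c₀) := by
    rw [← hΦ0, hΨdef, hΦ.localInverse_apply_image]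
  have hev := hΦ.eventually_right_inverse
  rw [hΦ0] at hev
  have hι : Filter.Tendsto (fun θ : ℝ => ((θ : ℝ), 1 - q)) (nhds 0) (nhds ((0:ℝ), 1 - q)) :=
    (continuous_id.prodMk continuous_const).tendsto 0
  have hev2 := hι.eventually hev
  obtain ⟨ε, hε, H⟩ := Metric.eventually_nhds_iff.mp hev2
  have key : ∀ (θ' x : ℝ), (∫ r in Iic x, f r * (1 + θ' * s r)) = F x + θ' * S x := by
    intro θ' x
    have hrw : ∀ r, f r * (1 + θ' * s r) = f r + θ' * (s r * f r) := fun r => by ring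
    simp_rw [hrw]
    rw [integral_add hf_int.integrableOn ((hsf_int.const_mul θ').integrableOn),
      integral_const_mul]
  refine ⟨ε, hε, fun θ => (Ψ (θ, 1 - q)).2, by show (Ψ ((0:ℝ), 1 - q)).2 = c₀; rw [hΨ0], ?_, ?_⟩
  · intro θ hθ
    have hdist : dist θ (0:ℝ) < ε := by
      rw [Real.dist_eq, sub_zero]
      exact abs_lt.mpr ⟨hθ.1, hθ.2⟩
    have hX := H hdist
    have h1 : (Ψ (θ, 1 - q)).1 = θ := congrArg Prod.fst hX
    have h2 : G (Ψ (θ, 1 - q)) = 1 - q := congrArg Prod.snd hX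
    rw [hGdef] at h2
    simp only [h1] at h2
    rw [key θ ((Ψ (θ, 1 - q)).2)]
    linarith
  · have hΨd := hΦ.to_localInverse
    rw [hΦ0] at hΨd
    have hι2 : HasDerivAt (fun θ : ℝ => ((θ : ℝ), 1 - q)) ((1:ℝ), (0:ℝ)) 0 :=
      (hasDerivAt_id 0).prodMk (hasDerivAt_const 0 _)
    have h2 : HasDerivAt (fun θ : ℝ => Ψ (θ, 1 - q))
        ((triEquiv (S c₀) (f c₀) hb).symm ((1:ℝ), (0:ℝ))) 0 :=
      by have := (hΨd.hasFDerivAt).comp_hasDerivAt 0 hι2; exact this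
    have h3 : HasDerivAt (fun θ : ℝ => (Ψ (θ, 1 - q)).2)
        (((triEquiv (S c₀) (f c₀) hb).symm ((1:ℝ), (0:ℝ))).2) 0 :=
      (ContinuousLinearMap.snd ℝ ℝ ℝ).hasFDerivAt.comp_hasDerivAt 0 h2
    have hIoi : (∫ r in Ioi c₀, s r * f r) = - S c₀ := by
      have h := intervalIntegral.integral_Iic_add_Ioi (b := c₀) hsf_int.integrableOn hsf_int.integrableOn
      rw [hs_mean] at h
      rw [hSdef]
      linarith
    have hval : (∫ r in Ioi c₀, s r * f r) / f c₀
        = ((triEquiv (S c₀) (f c₀) hb).symm ((1:ℝ), (0:ℝ))).2 := by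
      rw [hIoi, triEquiv_symm_apply]
      field_simp
      ring
    rw [hval]
    exact h3
end

section
/- There exist ε > 0 and a function c : (−ε, ε) → ℝ with c(0) = c₀ such that (1/n)(1 − F_θ(c(θ))^n) = q for all θ ∈ (−ε, ε), c is differentiable at 0, and c'(0) = (∫_{c₀}^∞ s(r) f(r) dr) / f(c₀). (In the second-price auction with a quantity-targeting reserve price, the factor F(c₀)^{n−1} cancels and the influence function of the reserve price is ψ(r) = 1{r > c₀}/f(c₀), exactly as in the single-unit price-based allocation.) -/
open MeasureTheory Set
open Filter Asymptotics Topology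


lemma ftc_Iic {g : ℝ → ℝ} (hc : Continuous g) (hi : Integrable g) (x : ℝ) :
    HasDerivAt (fun y => ∫ t in Iic y, g t) (g x) x := by
  have key : (fun y => ∫ t in Iic y, g t) =
      fun y => (∫ t in Iic 0, g t) + ∫ t in (0:ℝ)..y, g t := by
    funext y
    rw [← intervalIntegral.integral_Iic_sub_Iic hi.integrableOn hi.integrableOn]
    ring
  rw [key]
  exact (intervalIntegral.integral_hasDerivAt_right hi.intervalIntegrable
    (hc.stronglyMeasurableAtFilter _ _) hc.continuousAt).const_add _

lemma integrable_of_integral_one {f : ℝ → ℝ} (h : ∫ x, f x = 1) : Integrable f := by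
  by_contra hnot
  rw [integral_undef hnot] at h
  norm_num at h


/-- Second-price auction with a quantity-targeting reserve price: the reserve price along
the perturbed path `F_θ(x) = ∫_{−∞}^x f(r)(1+θ s(r)) dr` exists locally, satisfies
`(1/n)(1 − F_θ(c(θ))ⁿ) = q`, and is differentiable at `0` with
`c'(0) = (∫_{c₀}^∞ s f)/f(c₀)`: the factor `F(c₀)^{n−1}` cancels and the influence
function is `ψ(r) = 1{r > c₀}/f(c₀)`, exactly as in the single-unit allocation. -/
theorem stmt13 (n : ℕ) (hn : 1 ≤ n) (f s : ℝ → ℝ)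
    (hf_cont : Continuous f) (hf_nonneg : ∀ x, 0 ≤ f x) (hf_prob : ∫ x, f x = 1)
    (hs_cont : Continuous s) (Ms : ℝ) (hs_bdd : ∀ x, |s x| ≤ Ms)
    (hs_mean : ∫ r, s r * f r = 0)
    (q : ℝ) (hq : q ∈ Ioo (0 : ℝ) (1 / n))
    (c₀ : ℝ) (hc₀ : (1 / n : ℝ) * (1 - (∫ r in Iic c₀, f r) ^ n) = q)
    (hfc₀_pos : 0 < f c₀) (hFc₀_pos : 0 < ∫ r in Iic c₀, f r) :
    ∃ ε > (0 : ℝ), ∃ c : ℝ → ℝ, c 0 = c₀ ∧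
      (∀ θ ∈ Ioo (-ε) ε,
        (1 / n : ℝ) * (1 - (∫ r in Iic (c θ), f r * (1 + θ * s r)) ^ n) = q) ∧
      HasDerivAt c ((∫ r in Ioi c₀, s r * f r) / f c₀) 0 := by
  set F : ℝ → ℝ := fun x => ∫ r in Iic x, f r with hFdef
  set S : ℝ → ℝ := fun x => ∫ r in Iic x, s r * f r with hSdef
  have hf_int : Integrable f := integrable_of_integral_one hf_prob
  have hsf_cont : Continuous (fun r => s r * f r) := hs_cont.mul hf_cont
  have hsf_int : Integrable (fun r => s r * f r) := by
    exact hf_int.bdd_mul hs_cont.aestronglyMeasurable (c := Ms) (Filter.Eventually.of_forall fun x => hs_bdd x)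
  have hMs0 : 0 ≤ Ms := le_trans (abs_nonneg _) (hs_bdd 0)
  have hFd : ∀ x, HasDerivAt F (f x) x := ftc_Iic hf_cont hf_int
  have hSd : ∀ x, HasDerivAt S (s x * f x) x := ftc_Iic hsf_cont hsf_int
  have hFcont : Continuous F := by
    apply continuous_iff_continuousAt.2; exact fun x => (hFd x).continuousAt
  have hScont : Continuous S := by
    apply continuous_iff_continuousAt.2; exact fun x => (hSd x).continuousAt
  -- bound on S
  have hSbound : ∀ x, |S x| ≤ Ms := by
    intro x
    have h1 : |S x| ≤ ∫ r in Iic x, |s r * f r| := by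
      simpa [hSdef, Real.norm_eq_abs, abs_mul] using norm_integral_le_integral_norm
        (μ := volume.restrict (Iic x)) (fun r => s r * f r)
    have h2 : (∫ r in Iic x, |s r * f r|) ≤ ∫ r in Iic x, Ms * f r := by
      apply setIntegral_mono_on hsf_int.abs.integrableOn
        ((hf_int.const_mul Ms).integrableOn) measurableSet_Iic
      intro r _
      rw [show |s r * f r| = |s r| * f r by rw [abs_mul, abs_of_nonneg (hf_nonneg r)]]
      exact mul_le_mul_of_nonneg_right (hs_bdd r) (hf_nonneg r)
    have h3 : (∫ r in Iic x, Ms * f r) ≤ ∫ r, Ms * f r := by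
      apply setIntegral_le_integral (hf_int.const_mul Ms)
      filter_upwards with r
      exact mul_nonneg hMs0 (hf_nonneg r)
    have h4 : (∫ r, Ms * f r) = Ms := by rw [integral_const_mul, hf_prob, mul_one]
    linarith
  -- S c₀ = - ∫ Ioi
  have hSc₀ : S c₀ = -∫ r in Ioi c₀, s r * f r := by
    have := intervalIntegral.integral_Iic_add_Ioi (μ := volume) (b := c₀)
      hsf_int.integrableOn hsf_int.integrableOn
    rw [hs_mean] at this
    simp only [hSdef]
    linarith
  -- the key rewriting of the perturbed CDF
  have hHrw : ∀ (θ x : ℝ), ∫ r in Iic x, f r * (1 + θ * s r) = F x + θ * S x := by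
    intro θ x
    have hfun : (fun r => f r * (1 + θ * s r)) = fun r => f r + θ * (s r * f r) := by
      funext r; ring
    rw [hfun, integral_add hf_int.integrableOn (hsf_int.integrableOn.const_mul θ),
      integral_const_mul]
  -- choose δ with f > f c₀ / 2 on the closed interval
  obtain ⟨δ, hδpos, hδ⟩ : ∃ δ > (0:ℝ), ∀ x ∈ Icc (c₀ - δ) (c₀ + δ), f c₀ / 2 < f x := by
    have hev : ∀ᶠ x in 𝓝 c₀, f c₀ / 2 < f x :=
      (hf_cont.tendsto c₀).eventually (eventually_gt_nhds (by linarith))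
    obtain ⟨δ, hδ0, hδ⟩ := Metric.eventually_nhds_iff.1 hev
    refine ⟨δ / 2, by linarith, fun x hx => hδ ?_⟩
    rw [Real.dist_eq, abs_sub_lt_iff]
    obtain ⟨h1, h2⟩ := hx
    constructor <;> linarith
  set a := c₀ - δ with ha
  set b := c₀ + δ with hb
  have hab : a < b := by simp [ha, hb]; linarith
  have hc₀mem : c₀ ∈ Icc a b := by constructor <;> simp [ha, hb] <;> linarith
  set m : ℝ := f c₀ / 2 with hm
  have hmpos : 0 < m := by positivity
  -- positivity of the gaps
  have hsubF : ∀ x y : ℝ, F y - F x = ∫ r in x..y, f r := fun x y =>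
    intervalIntegral.integral_Iic_sub_Iic hf_int.integrableOn hf_int.integrableOn
  have hdp : 0 < F b - F c₀ := by
    rw [hsubF]
    apply intervalIntegral.intervalIntegral_pos_of_pos_on hf_int.intervalIntegrable
    · intro x hx
      exact lt_trans hmpos (hδ x ⟨by simp [ha]; linarith [hx.1], hx.2.le⟩)
    · simp [hb]; linarith
  have hdm : 0 < F c₀ - F a := by
    rw [hsubF]
    apply intervalIntegral.intervalIntegral_pos_of_pos_on hf_int.intervalIntegrable
    · intro x hx
      exact lt_trans hmpos (hδ x ⟨hx.1.le, by simp [hb]; linarith [hx.2]⟩)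
    · simp [ha]; linarith
  set ε : ℝ := min (1 / (2 * (Ms + 1))) (min (F b - F c₀) (F c₀ - F a) / (Ms + 1)) with hε
  have hεpos : 0 < ε := by
    apply lt_min <;> positivity
  -- basic bound for θ in the window
  have hθMs : ∀ θ ∈ Ioo (-ε) ε, |θ| * Ms < min (F b - F c₀) (F c₀ - F a) := by
    intro θ hθ
    have h1 : |θ| < min (F b - F c₀) (F c₀ - F a) / (Ms + 1) :=
      lt_of_lt_of_le (abs_lt.2 ⟨hθ.1, hθ.2⟩) (min_le_right _ _)
    have h2 : |θ| * (Ms + 1) < min (F b - F c₀) (F c₀ - F a) :=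
      (lt_div_iff₀ (by positivity)).1 h1
    nlinarith [abs_nonneg θ]
  have hsmall : ∀ θ ∈ Ioo (-ε) ε, ∀ x, |θ * s x| ≤ 1 / 2 := by
    intro θ hθ x
    have h1 : |θ| ≤ 1 / (2 * (Ms + 1)) :=
      le_trans (abs_lt.2 ⟨hθ.1, hθ.2⟩).le (min_le_left _ _)
    have h2 : |θ * s x| ≤ |θ| * Ms := by
      rw [abs_mul]
      exact mul_le_mul_of_nonneg_left (hs_bdd x) (abs_nonneg θ)
    have h3 : 1 / (2 * (Ms + 1)) * Ms ≤ 1 / 2 := by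
      rw [div_mul_eq_mul_div, div_le_div_iff₀ (by positivity) (by norm_num)]
      nlinarith
    calc |θ * s x| ≤ |θ| * Ms := h2
      _ ≤ 1 / (2 * (Ms + 1)) * Ms := mul_le_mul_of_nonneg_right h1 hMs0
      _ ≤ 1 / 2 := h3
  -- strict monotonicity of H θ on [a,b]
  have hmono : ∀ θ ∈ Ioo (-ε) ε, StrictMonoOn (fun x => F x + θ * S x) (Icc a b) := by
    intro θ hθ
    apply strictMonoOn_of_deriv_pos (convex_Icc a b)
      (hFcont.add (continuous_const.mul hScont)).continuousOn
    intro x hx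
    rw [interior_Icc] at hx
    have hd : HasDerivAt (fun x => F x + θ * S x) (f x + θ * (s x * f x)) x :=
      (hFd x).add ((hSd x).const_mul θ)
    rw [show deriv (F + (fun x => θ) * S) x = f x + θ * (s x * f x) from hd.deriv]
    have hfx : m < f x := hδ x ⟨hx.1.le, hx.2.le⟩
    have := (abs_le.1 (hsmall θ hθ x)).1
    nlinarith
  -- existence of the solution
  have hex : ∀ θ ∈ Ioo (-ε) ε, ∃ x ∈ Icc a b, F x + θ * S x = F c₀ := by
    intro θ hθ
    have hθSa : |θ * S a| ≤ |θ| * Ms := by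
      rw [abs_mul]
      exact mul_le_mul_of_nonneg_left (hSbound a) (abs_nonneg θ)
    have hθSb : |θ * S b| ≤ |θ| * Ms := by
      rw [abs_mul]
      exact mul_le_mul_of_nonneg_left (hSbound b) (abs_nonneg θ)
    have hmin := hθMs θ hθ
    have hminp := min_le_left (F b - F c₀) (F c₀ - F a)
    have hminm := min_le_right (F b - F c₀) (F c₀ - F a)
    have hmemIcc : F c₀ ∈ Icc (F a + θ * S a) (F b + θ * S b) := by
      constructor
      · have := (abs_le.1 hθSa).2
        linarith
      · have := (abs_le.1 hθSb).1
        linarith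
    have := intermediate_value_Icc hab.le
      ((hFcont.add (continuous_const.mul hScont)).continuousOn (s := Icc a b)) hmemIcc
    obtain ⟨x, hx, hxe⟩ := this
    exact ⟨x, hx, hxe⟩
  classical
  set c : ℝ → ℝ := fun θ => if h : θ ∈ Ioo (-ε) ε then (hex θ h).choose else c₀ with hcdef
  have hcspec : ∀ θ (h : θ ∈ Ioo (-ε) ε), c θ ∈ Icc a b ∧ F (c θ) + θ * S (c θ) = F c₀ := by
    intro θ h
    simp only [hcdef, dif_pos h]
    exact ⟨(hex θ h).choose_spec.1, (hex θ h).choose_spec.2⟩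
  have h0mem : (0:ℝ) ∈ Ioo (-ε) ε := by constructor <;> simp [hεpos] <;> linarith
  have hc0 : c 0 = c₀ := by
    have h := hcspec 0 h0mem
    have := (hmono 0 h0mem).injOn h.1 hc₀mem (by simpa using h.2)
    simpa using this
  -- Lipschitz bound
  have hLip : ∀ θ ∈ Ioo (-ε) ε, |c θ - c₀| ≤ Ms / m * |θ| := by
    intro θ hθ
    obtain ⟨hmem, heq⟩ := hcspec θ hθ
    have key : m * |c θ - c₀| ≤ |F (c θ) - F c₀| := by
      rcases le_or_gt c₀ (c θ) with h | h
      · have hsub := hsubF c₀ (c θ)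
        have hlow : m * (c θ - c₀) ≤ ∫ r in c₀..(c θ), f r := by
          have hmono' := intervalIntegral.integral_mono_on h
            (intervalIntegrable_const (c := m)) hf_int.intervalIntegrable
            (fun x hx => (hδ x ⟨le_trans hc₀mem.1 hx.1, le_trans hx.2 hmem.2⟩).le)
          rw [intervalIntegral.integral_const, smul_eq_mul] at hmono'
          rw [mul_comm]; exact hmono'
        have hnn : (0:ℝ) ≤ m * (c θ - c₀) := mul_nonneg hmpos.le (sub_nonneg.2 h)
        rw [abs_of_nonneg (sub_nonneg.2 h), abs_of_nonneg (by linarith : (0:ℝ) ≤ F (c θ) - F c₀)]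
        linarith
      · have hsub := hsubF (c θ) c₀
        have hlow : m * (c₀ - c θ) ≤ ∫ r in (c θ)..c₀, f r := by
          have hmono' := intervalIntegral.integral_mono_on h.le
            (intervalIntegrable_const (c := m)) hf_int.intervalIntegrable
            (fun x hx => (hδ x ⟨le_trans hmem.1 hx.1, le_trans hx.2 hc₀mem.2⟩).le)
          rw [intervalIntegral.integral_const, smul_eq_mul] at hmono'
          rw [mul_comm]; exact hmono'
        have hpp : (0:ℝ) < m * (c₀ - c θ) := mul_pos hmpos (sub_pos.2 h)
        rw [abs_of_neg (sub_neg.2 h), abs_of_neg (by linarith : F (c θ) - F c₀ < 0)]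
        linarith
    have hFeq : |F (c θ) - F c₀| ≤ |θ| * Ms := by
      have : F (c θ) - F c₀ = -(θ * S (c θ)) := by linarith
      rw [this, abs_neg, abs_mul]
      exact mul_le_mul_of_nonneg_left (hSbound _) (abs_nonneg θ)
    rw [div_mul_eq_mul_div, le_div_iff₀ hmpos, mul_comm (|c θ - c₀|) m]
    calc m * |c θ - c₀| ≤ |θ| * Ms := le_trans key hFeq
      _ = Ms * |θ| := mul_comm _ _
  have htends : Tendsto c (𝓝 0) (𝓝 c₀) := by
    have h0 : Tendsto (fun θ => c θ - c₀) (𝓝 0) (𝓝 0) := by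
      apply squeeze_zero_norm' (a := fun θ : ℝ => Ms / m * |θ|)
      · filter_upwards [Ioo_mem_nhds (by linarith [hεpos] : -ε < (0:ℝ)) hεpos] with θ hθ
        simpa [Real.norm_eq_abs] using hLip θ hθ
      · have : Tendsto (fun θ : ℝ => Ms / m * |θ|) (𝓝 0) (𝓝 (Ms / m * |0|)) :=
          ((continuous_const.mul continuous_abs).tendsto (0:ℝ))
        simpa using this
    have := h0.add_const c₀
    simpa using this
  refine ⟨ε, hεpos, c, hc0, ?_, ?_⟩
  · intro θ hθ
    rw [hHrw θ (c θ), (hcspec θ hθ).2]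
    exact hc₀
  · -- the derivative
    have hfne : f c₀ ≠ 0 := ne_of_gt hfc₀_pos
    have hLeq : (∫ r in Ioi c₀, s r * f r) / f c₀ = -S c₀ / f c₀ := by
      rw [hSc₀]; ring
    rw [hasDerivAt_iff_isLittleO, hc0]
    simp only [sub_zero, smul_eq_mul]
    -- big-O bound for c θ - c₀
    have hO : (fun θ => c θ - c₀) =O[𝓝 0] fun θ => θ := by
      apply IsBigO.of_bound (Ms / m)
      filter_upwards [Ioo_mem_nhds (by linarith [hεpos] : -ε < (0:ℝ)) hεpos] with θ hθ
      simpa [Real.norm_eq_abs] using hLip θ hθ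
    have h1 : (fun θ => F (c θ) - F c₀ - (c θ - c₀) * f c₀) =o[𝓝 0] fun θ => θ := by
      have := (hasDerivAt_iff_isLittleO.1 (hFd c₀)).comp_tendsto htends
      simp only [Function.comp, smul_eq_mul] at this
      exact this.trans_isBigO hO
    have h2 : (fun θ => θ * (S (c θ) - S c₀)) =o[𝓝 0] fun θ => θ := by
      have ht : Tendsto (fun θ => S (c θ) - S c₀) (𝓝 0) (𝓝 0) := by
        have := ((hScont.tendsto c₀).comp htends).sub_const (S c₀)
        simpa [Function.comp] using this
      have h2a : (fun θ => S (c θ) - S c₀) =o[𝓝 0] fun _ : ℝ => (1:ℝ) :=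
        (isLittleO_one_iff ℝ).2 ht
      have := (isBigO_refl (fun θ : ℝ => θ) (𝓝 0)).mul_isLittleO h2a
      simpa using this
    have hcomb : (fun θ => (-(F (c θ) - F c₀ - (c θ - c₀) * f c₀) - θ * (S (c θ) - S c₀)) / f c₀)
        =o[𝓝 0] fun θ => θ := by
      have := (h1.neg_left.sub h2).const_mul_left (f c₀)⁻¹
      simpa [div_eq_inv_mul] using this
    apply hcomb.congr' _ (EventuallyEq.refl _ _)
    filter_upwards [Ioo_mem_nhds (by linarith [hεpos] : -ε < (0:ℝ)) hεpos] with θ hθ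
    have heq := (hcspec θ hθ).2
    rw [hLeq]
    field_simp
    ring_nf
    linarith [heq]
end
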